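/- The average codeword length of C_I under the Gauss–Kuzmin distribution, H = ∑_{b=1}^∞ (2⌊log₂ b⌋ + 1) · log₂(1 + 1/(b(b+2))), is finite and satisfies 3.50 < H < 3.51. -/

import Mathlib

set_option maxRecDepth 4000

open Real Filter Finset Topology

noncomputable def aseq (k : ℕ) : ℝ := Real.logb 2 (1 + (1/2 : ℝ) ^ k)

noncomputable def gg (m : ℕ) : ℝ := Real.logb 2 (((m : ℝ) + 1) / m)

noncomputable def mu (b : ℕ) : ℝ := Real.logb 2 (1 + 1 / ((b : ℝ) * (b + 2)))

noncomputable def ff (b : ℕ) : ℝ :=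
  ((2 * Nat.log 2 b + 1 : ℕ) : ℝ) * mu b

lemma aseq_nonneg (k : ℕ) : 0 ≤ aseq k := by
  apply Real.logb_nonneg (by norm_num)
  have : (0:ℝ) ≤ (1/2:ℝ)^k := by positivity
  linarith

lemma aseq_le (k : ℕ) : aseq k ≤ (3/2) * (1/2 : ℝ) ^ k := by
  have hx : (0:ℝ) ≤ (1/2:ℝ)^k := by positivity
  have h1 : Real.log (1 + (1/2:ℝ)^k) ≤ (1/2:ℝ)^k := by
    have := Real.log_le_sub_one_of_pos (x := 1 + (1/2:ℝ)^k) (by linarith)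
    linarith
  have h2 : (0.6931471803 : ℝ) < Real.log 2 := Real.log_two_gt_d9
  rw [aseq, Real.logb, div_le_iff₀ (by linarith)]
  nlinarith [hx]

lemma summable_aseq : Summable aseq :=
  Summable.of_nonneg_of_le aseq_nonneg aseq_le
    ((summable_geometric_of_lt_one (by norm_num) (by norm_num)).mul_left _)

lemma aseq_zero : aseq 0 = 1 := by
  simp [aseq]
  norm_num

lemma mu_nonneg (b : ℕ) : 0 ≤ mu b := by
  apply Real.logb_nonneg (by norm_num)
  have : (0:ℝ) ≤ 1 / ((b : ℝ) * (b + 2)) := by positivity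
  linarith

lemma ff_nonneg (b : ℕ) : 0 ≤ ff b :=
  mul_nonneg (by positivity) (mu_nonneg b)

lemma mu_eq (b : ℕ) (hb : 1 ≤ b) : mu b = gg b - gg (b + 1) := by
  have hx : (1:ℝ) ≤ (b:ℝ) := by exact_mod_cast hb
  have hxpos : (0:ℝ) < (b:ℝ) := by linarith
  have key : 1 + 1 / ((b : ℝ) * (b + 2)) =
      (((b:ℝ) + 1) / b) / ((((b:ℝ)+1) + 1) / ((b:ℝ)+1)) := by
    field_simp
    ring
  rw [mu, key, Real.logb_div (by positivity) (by positivity), gg, gg]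
  push_cast
  ring_nf

lemma tel (M : ℕ) (hM : 1 ≤ M) : ∀ N, M ≤ N →
    ∑ b ∈ Finset.Ico M N, mu b = gg M - gg N := by
  intro N hN
  induction N, hN using Nat.le_induction with
  | base => simp
  | succ N hMN ih =>
    rw [Finset.sum_Ico_succ_top hMN, ih, mu_eq N (le_trans hM hMN)]
    ring

lemma gg_pow (k : ℕ) : gg (2 ^ k) = aseq k := by
  rw [gg, aseq]
  congr 1
  have h : (0:ℝ) < (2:ℝ)^k := by positivity
  push_cast
  field_simp
  try ring
  rw [← mul_pow]; norm_num

noncomputable def useq (K : ℕ) : ℝ := ∑ b ∈ Finset.Ico 1 (2 ^ K), ff b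

lemma useq_succ (K : ℕ) :
    useq (K + 1) = useq K + (2 * (K:ℝ) + 1) * (aseq K - aseq (K + 1)) := by
  have h1 : (1:ℕ) ≤ 2 ^ K := Nat.one_le_two_pow
  have h2 : (2:ℕ) ^ K ≤ 2 ^ (K + 1) := Nat.pow_le_pow_right (by norm_num) (by omega)
  rw [useq, useq, ← Finset.sum_Ico_consecutive _ h1 h2]
  congr 1
  have hblock : ∀ b ∈ Finset.Ico (2^K) (2^(K+1)), ff b = (2 * (K:ℝ) + 1) * mu b := by
    intro b hb
    rw [Finset.mem_Ico] at hb
    rw [ff, Nat.log_eq_of_pow_le_of_lt_pow hb.1 hb.2]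
    push_cast
    ring
  rw [Finset.sum_congr rfl hblock, ← Finset.mul_sum,
    tel (2^K) h1 (2^(K+1)) h2, gg_pow, gg_pow]

lemma useq_closed (K : ℕ) :
    useq K = 2 * ∑ k ∈ Finset.range K, aseq k - aseq 0 - (2 * (K:ℝ) - 1) * aseq K := by
  induction K with
  | zero => simp [useq]
  | succ K ih =>
    rw [useq_succ K, ih, Finset.sum_range_succ]
    push_cast
    ring

lemma useq_tendsto : Tendsto useq atTop (𝓝 (2 * (∑' k, aseq k) - 1)) := by
  have h1 : Tendsto (fun K => ∑ k ∈ Finset.range K, aseq k) atTop (𝓝 (∑' k, aseq k)) :=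
    summable_aseq.hasSum.tendsto_sum_nat
  have h2 : Tendsto (fun K : ℕ => (2 * (K:ℝ) - 1) * aseq K) atTop (𝓝 0) := by
    apply squeeze_zero_norm (a := fun K : ℕ => 3 * ((K:ℝ) * (1/2:ℝ)^K) + (3/2) * (1/2:ℝ)^K)
    · intro K
      have hK : (0:ℝ) ≤ (K:ℝ) := Nat.cast_nonneg K
      have ha := aseq_nonneg K
      have hb := aseq_le K
      have habs : |2 * (K:ℝ) - 1| ≤ 2 * (K:ℝ) + 1 := by
        rw [abs_le]; constructor <;> linarith
      calc ‖(2 * (K:ℝ) - 1) * aseq K‖ = |2 * (K:ℝ) - 1| * aseq K := by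
            rw [Real.norm_eq_abs, abs_mul, abs_of_nonneg ha]
        _ ≤ (2 * (K:ℝ) + 1) * ((3/2) * (1/2:ℝ)^K) := by
            apply mul_le_mul habs hb ha (by linarith)
        _ = 3 * ((K:ℝ) * (1/2:ℝ)^K) + (3/2) * (1/2:ℝ)^K := by ring
    · have hg : Tendsto (fun K : ℕ => (K:ℝ) * (1/2:ℝ)^K) atTop (𝓝 0) := by
        have := (summable_pow_mul_geometric_of_norm_lt_one (R := ℝ) 1
          (r := 1/2) (by norm_num)).tendsto_atTop_zero
        simpa using this
      have hp : Tendsto (fun K : ℕ => (1/2:ℝ)^K) atTop (𝓝 0) :=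
        tendsto_pow_atTop_nhds_zero_of_lt_one (by norm_num) (by norm_num)
      have := (hg.const_mul 3).add (hp.const_mul (3/2))
      simpa using this
  have h3 := ((h1.const_mul 2).sub (tendsto_const_nhds (x := aseq 0))).sub h2
  rw [sub_zero] at h3
  have h4 := h3.congr fun K => (useq_closed K).symm
  rwa [aseq_zero] at h4

lemma aseq_mono_step (K : ℕ) : aseq (K + 1) ≤ aseq K := by
  apply Real.logb_le_logb_of_le (by norm_num)
  · positivity
  · have : (1/2:ℝ)^(K+1) ≤ (1/2:ℝ)^K :=
      pow_le_pow_of_le_one (by norm_num) (by norm_num) (by omega)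
    linarith

lemma useq_mono : Monotone useq := by
  apply monotone_nat_of_le_succ
  intro K
  rw [useq_succ K]
  have h1 := aseq_mono_step K
  have hK : (0:ℝ) ≤ (K:ℝ) := Nat.cast_nonneg K
  nlinarith

noncomputable def H0 : ℝ := 2 * (∑' k, aseq k) - 1

noncomputable def Fseq (n : ℕ) : ℝ := ff (n + 1)

lemma useq_tendsto' : Tendsto useq atTop (𝓝 H0) := useq_tendsto

lemma range_sum_F (m : ℕ) : ∑ n ∈ Finset.range m, Fseq n = ∑ b ∈ Finset.Ico 1 (m + 1), ff b := by
  rw [Finset.sum_Ico_eq_sum_range]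
  simp only [Nat.add_sub_cancel, Fseq]
  exact Finset.sum_congr rfl fun k _ => by rw [Nat.add_comm]

lemma psum_le (m : ℕ) : ∑ n ∈ Finset.range m, Fseq n ≤ H0 := by
  rw [range_sum_F]
  have h1 : ∑ b ∈ Finset.Ico 1 (m + 1), ff b ≤ useq m := by
    apply Finset.sum_le_sum_of_subset_of_nonneg
    · apply Finset.Ico_subset_Ico le_rfl
      exact Nat.lt_two_pow_self
    · exact fun b _ _ => ff_nonneg b
  exact h1.trans (useq_mono.ge_of_tendsto useq_tendsto' m)

lemma summable_F : Summable Fseq :=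
  summable_of_sum_range_le (fun n => ff_nonneg _) psum_le

lemma tsum_F : ∑' n, Fseq n = H0 := by
  apply le_antisymm
  · exact Real.tsum_le_of_sum_range_le (fun n => ff_nonneg _) psum_le
  · apply le_of_tendsto useq_tendsto'
    filter_upwards with K
    have : useq K = ∑ n ∈ Finset.range (2 ^ K - 1), Fseq n := by
      rw [range_sum_F, Nat.sub_add_cancel Nat.one_le_two_pow, useq]
    rw [this]
    exact Summable.sum_le_tsum _ (fun n _ => ff_nonneg _) summable_F

lemma hasSum_pnat : HasSum (fun b : ℕ+ =>
    ((2 * Nat.log 2 (b : ℕ) + 1 : ℕ) : ℝ) * Real.logb 2 (1 + 1 / ((b : ℝ) * (b + 2)))) H0 := by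
  rw [← Equiv.hasSum_iff (Equiv.pnatEquivNat.symm)]
  have : (fun b : ℕ+ =>
      ((2 * Nat.log 2 (b : ℕ) + 1 : ℕ) : ℝ) * Real.logb 2 (1 + 1 / ((b : ℝ) * (b + 2))))
      ∘ (Equiv.pnatEquivNat.symm) = Fseq := by
    funext n
    simp only [Function.comp, Fseq, ff, mu, Equiv.pnatEquivNat_symm_apply]
    norm_num [Nat.succPNat]
  rw [this]
  exact tsum_F ▸ summable_F.hasSum

noncomputable def Pval : ℝ := 720413716161839357604375 / 2 ^ 78

lemma sum12 : ∑ k ∈ Finset.range 12, aseq (k + 1) = Real.logb 2 Pval := by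
  have h : ∀ x ∈ Finset.range 12, (1 + (1/2:ℝ) ^ (x+1)) ≠ 0 := by
    intro x _; positivity
  rw [show (fun k => aseq (k+1)) = fun k => Real.logb 2 (1 + (1/2:ℝ)^(k+1)) from rfl] at *
  rw [← Real.logb_prod _ _ h]
  congr 1
  rw [Pval]
  norm_num [Finset.prod_range_succ]

lemma Pval_pos : (0:ℝ) < Pval := by rw [Pval]; norm_num

lemma logP_gt : (5:ℝ)/4 < Real.logb 2 Pval := by
  have h32 : (2:ℝ)^5 < Pval ^ 4 := by
    rw [Pval, div_pow, lt_div_iff₀ (by positivity)]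
    norm_num
  have h := Real.logb_lt_logb (b := 2) (by norm_num) (by positivity : (0:ℝ) < (2:ℝ)^5) h32
  rw [Real.logb_pow, Real.logb_pow, Real.logb_self_eq_one (by norm_num)] at h
  push_cast at h
  linarith

lemma logP_lt : Real.logb 2 Pval < 69/55 := by
  have h32 : Pval ^ 55 < (2:ℝ)^69 := by
    rw [Pval, div_pow, div_lt_iff₀ (by positivity)]
    norm_num
  have h := Real.logb_lt_logb (b := 2) (by norm_num) (pow_pos Pval_pos 55) h32
  rw [Real.logb_pow, Real.logb_pow, Real.logb_self_eq_one (by norm_num)] at h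
  push_cast at h
  linarith

lemma sum13 : ∑ k ∈ Finset.range 13, aseq k = 1 + Real.logb 2 Pval := by
  rw [Finset.sum_range_succ', sum12, aseq_zero]
  ring

lemma Asum_lower : (9:ℝ)/4 < ∑' k, aseq k := by
  have h1 : ∑ k ∈ Finset.range 13, aseq k ≤ ∑' k, aseq k :=
    Summable.sum_le_tsum _ (fun k _ => aseq_nonneg k) summable_aseq
  rw [sum13] at h1
  have := logP_gt
  linarith

lemma tail_le : ∑' k, aseq (k + 13) ≤ 3 / 8192 := by
  have hg : Summable (fun k : ℕ => ((3/2) * (1/2:ℝ)^13) * (1/2:ℝ)^k) :=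
    (summable_geometric_of_lt_one (by norm_num) (by norm_num)).mul_left _
  have hle : ∀ k : ℕ, aseq (k + 13) ≤ ((3/2) * (1/2:ℝ)^13) * (1/2:ℝ)^k := by
    intro k
    have := aseq_le (k + 13)
    rw [pow_add] at this
    calc aseq (k + 13) ≤ 3/2 * ((1/2:ℝ)^k * (1/2:ℝ)^13) := this
      _ = ((3/2) * (1/2:ℝ)^13) * (1/2:ℝ)^k := by ring
  have h1 : ∑' k, aseq (k + 13) ≤ ∑' k : ℕ, ((3/2) * (1/2:ℝ)^13) * (1/2:ℝ)^k :=
    Summable.tsum_le_tsum hle ((summable_nat_add_iff 13).2 summable_aseq) hg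
  rw [tsum_mul_left, tsum_geometric_of_lt_one (by norm_num) (by norm_num)] at h1
  calc ∑' k, aseq (k + 13) ≤ ((3/2) * (1/2:ℝ)^13) * (1 - 1/2)⁻¹ := h1
    _ = 3/8192 := by norm_num

lemma Asum_upper : ∑' k, aseq k < 451/200 := by
  have h := Summable.sum_add_tsum_nat_add 13 summable_aseq
  rw [← h, sum13]
  have h1 := tail_le
  have h2 := logP_lt
  have : (1:ℝ) + 69/55 + 3/8192 < 451/200 := by norm_num
  linarith

theorem CI_average_length :
    Summable (fun b : ℕ+ =>
      ((2 * Nat.log 2 (b : ℕ) + 1 : ℕ) : ℝ) * Real.logb 2 (1 + 1 / ((b : ℝ) * (b + 2)))) ∧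
    3.50 < ∑' b : ℕ+,
      ((2 * Nat.log 2 (b : ℕ) + 1 : ℕ) : ℝ) * Real.logb 2 (1 + 1 / ((b : ℝ) * (b + 2))) ∧
    (∑' b : ℕ+,
      ((2 * Nat.log 2 (b : ℕ) + 1 : ℕ) : ℝ) * Real.logb 2 (1 + 1 / ((b : ℝ) * (b + 2)))) < 3.51 := by
  have hs := hasSum_pnat
  refine ⟨hs.summable, ?_, ?_⟩ <;> rw [hs.tsum_eq] <;> rw [H0]
  · have := Asum_lower; norm_num; linarith
  · have := Asum_upper; norm_num; linarith
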